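/- Let A be a commutative ring, P a finitely generated projective A-module, and t a non-zero-divisor of A such that the localization P_t is a free A_t-module of rank d. Then there exists a free submodule F ≅ A^d of P and a positive integer l such that, setting s = t^l, one has sP ⊆ F. -/

import Mathlib

theorem exists_free_submodule_of_localization_free
    (A : Type*) [CommRing A] [IsNoetherianRing A]
    (P : Type*) [AddCommGroup P] [Module A P]
    [Module.Finite A P] [Module.Projective A P]
    (t : A) (ht : t ∈ nonZeroDivisors A) (d : ℕ)
    (hfree : Nonempty (Module.Basis (Fin d) (Localization.Away t)
      (LocalizedModule (Submonoid.powers t) P))) :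
    ∃ (F : Submodule A P) (l : ℕ), 0 < l ∧
      Nonempty (F ≃ₗ[A] (Fin d → A)) ∧
      ∀ x : P, t ^ l • x ∈ F := by
  classical
  set S : Submonoid A := Submonoid.powers t with hS_def
  set At := Localization.Away t
  set M := LocalizedModule (Submonoid.powers t) P with hM_def
  set f : P →ₗ[A] M := LocalizedModule.mkLinearMap S P with hf_def
  have hS : S ≤ nonZeroDivisors A := Submonoid.powers_le.mpr ht
  -- elements of S act injectively on P (since P is projective)
  have hreg : ∀ (s : S) (x : P), (s : A) • x = 0 → x = 0 := by
    intro s x hx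
    obtain ⟨σ, hσ⟩ := Module.projective_def.mp (inferInstance : Module.Projective A P)
    have h1 : (s : A) • σ x = 0 := by rw [← map_smul, hx, map_zero]
    have h2 : σ x = 0 := by
      ext p
      have := congrArg (fun g => g p) h1
      simp only [Finsupp.smul_apply, Finsupp.coe_zero, Pi.zero_apply, smul_eq_mul] at this
      exact (mul_right_mem_nonZeroDivisors_eq_zero_iff (hS s.2)).mp (by rwa [mul_comm] at this)
    have := hσ x
    rw [h2, map_zero] at this
    exact this.symm
  -- f is injective
  have hf_inj : Function.Injective f := by
    intro x y hxy
    have h : LocalizedModule.mk x (1 : S) = LocalizedModule.mk y (1 : S) := hxy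
    obtain ⟨u, hu⟩ := LocalizedModule.mk_eq.mp h
    simp only [one_smul] at hu
    rw [Submonoid.smul_def, Submonoid.smul_def] at hu
    have : (u : A) • (x - y) = 0 := by rw [smul_sub, hu, sub_self]
    exact sub_eq_zero.mp (hreg u (x - y) this)
  obtain ⟨b⟩ := hfree
  -- choose representatives for the basis vectors
  have hrep : ∀ m : M, ∃ (p : P) (s : S), m = LocalizedModule.mk p s := fun m =>
    LocalizedModule.induction_on (fun p s => ⟨p, s, rfl⟩) m
  choose q s hqs using fun i => hrep (b i)
  -- f (q i) = algebraMap (s i) • b i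
  have hfq : ∀ i, f (q i) = algebraMap A At (s i : A) • b i := by
    intro i
    rw [hqs i]
    show LocalizedModule.mk (q i) 1 = _
    rw [algebraMap_smul (R := A) At ((s i : A)) (LocalizedModule.mk (q i) (s i)),
      LocalizedModule.smul'_mk, ← Submonoid.smul_def, LocalizedModule.mk_cancel]
  have hu : ∀ i, IsUnit (algebraMap A At (s i : A)) := fun i =>
    IsLocalization.map_units At (s i)
  set u : Fin d → Atˣ := fun i => (hu i).unit with hu_def
  have hfq' : ∀ i, f (q i) = u i • b i := by
    intro i
    rw [hfq i, Units.smul_def, IsUnit.unit_spec]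
  -- linear independence over At
  have hli_At : LinearIndependent At (f ∘ q) := by
    have := b.linearIndependent.units_smul u
    convert this using 1
    funext i
    exact hfq' i
  have halg_inj : Function.Injective (algebraMap A At) := IsLocalization.injective At hS
  have hinj1 : Function.Injective fun a : A => a • (1 : At) := by
    intro a a' h
    apply halg_inj
    simpa [Algebra.smul_def] using h
  have hli_A : LinearIndependent A (f ∘ q) := hli_At.restrict_scalars hinj1
  have hq : LinearIndependent A q := hli_A.of_comp f
  set F : Submodule A P := Submodule.span A (Set.range q) with hF_def
  have hBspan : Module.Basis (Fin d) A F := Module.Basis.span hq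
  -- span of f ∘ q over At is ⊤
  have hb_mem : ∀ i, b i ∈ Submodule.span At (Set.range (f ∘ q)) := by
    intro i
    have : b i = ((u i)⁻¹ : Atˣ) • f (q i) := by
      rw [hfq' i, inv_smul_smul]
    rw [this, Units.smul_def]
    exact Submodule.smul_mem _ _ (Submodule.subset_span ⟨i, rfl⟩)
  have htop : Submodule.span At (Set.range (f ∘ q)) = ⊤ := by
    rw [eq_top_iff, ← b.span_eq]
    refine Submodule.span_le.mpr ?_
    rintro x ⟨i, rfl⟩
    exact hb_mem i
  -- pointwise: some power of t pushes any x into F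
  have key : ∀ x : P, ∃ n : ℕ, t ^ n • x ∈ F := by
    intro x
    have hx : f x ∈ Submodule.span At (Set.range (f ∘ q)) := htop ▸ Submodule.mem_top
    obtain ⟨c, hc⟩ := Submodule.mem_span_range_iff_exists_fun At |>.mp hx
    simp only [Function.comp_apply] at hc
    obtain ⟨σ, hσ⟩ := IsLocalization.exist_integer_multiples_of_finite S c
    choose a ha using hσ
    obtain ⟨n, hn⟩ := σ.2
    refine ⟨n, ?_⟩
    have heq : f (t ^ n • x) = f (∑ i, a i • q i) := by
      rw [map_smul, map_sum]
      have h1 : t ^ n • f x = (σ : A) • f x := by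
        have : t ^ n = (σ : A) := hn
        rw [this]
      rw [h1, ← hc, Finset.smul_sum]
      refine Finset.sum_congr rfl fun i _ => ?_
      rw [map_smul]
      calc (σ : A) • c i • f (q i) = ((σ : A) • c i) • f (q i) :=
            (smul_assoc (σ : A) (c i) (f (q i))).symm
        _ = algebraMap A At (a i) • f (q i) := by rw [ha i]
        _ = a i • f (q i) := algebraMap_smul At (a i) (f (q i))
    have := hf_inj heq
    rw [this]
    exact Submodule.sum_mem _ fun i _ =>
      Submodule.smul_mem _ _ (Submodule.subset_span ⟨i, rfl⟩)
  -- get a uniform power using finitely many generators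
  obtain ⟨G, hG⟩ := Module.Finite.fg_top (R := A) (M := P)
  choose nfun hnfun using fun g : {x // x ∈ G} => key (g : P)
  set L : ℕ := (Finset.univ.sup fun g : {x // x ∈ G} => nfun g) + 1 with hL_def
  have hmono : ∀ (x : P) (n m : ℕ), n ≤ m → t ^ n • x ∈ F → t ^ m • x ∈ F := by
    intro x n m hnm hx
    have : t ^ m • x = t ^ (m - n) • t ^ n • x := by
      rw [smul_smul, ← pow_add, Nat.sub_add_cancel hnm]
    rw [this]
    exact Submodule.smul_mem _ _ hx
  refine ⟨F, L, Nat.succ_pos _, ⟨hBspan.equivFun⟩, ?_⟩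
  intro x
  have hTop : (⊤ : Submodule A P) ≤ F.comap (LinearMap.lsmul A P (t ^ L)) := by
    rw [← hG]
    refine Submodule.span_le.mpr ?_
    intro g hg
    simp only [Submodule.mem_comap, LinearMap.lsmul_apply, SetLike.mem_coe]
    refine hmono g (nfun ⟨g, hg⟩) L ?_ (hnfun ⟨g, hg⟩)
    exact le_trans (Finset.le_sup (f := fun g : {x // x ∈ G} => nfun g) (Finset.mem_univ (⟨g, hg⟩ : {x // x ∈ G}))) (Nat.le_succ _)
  have := hTop (Submodule.mem_top (x := x))
  simpa using this
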